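/- Concavity in the channel: for fixed marginal p_X, the map taking the conditional distribution p_{Y|X} to Σ_y (Σ_x p_{Y|X=x}(y)^α p_X(x))^{1/α} is concave on the set of channels from X to Y, for every α < 0. -/

import Mathlib

open Real Finset

/-- Reverse Hölder inequality for exponents `0 < p < 1`, `q = p/(p-1) < 0`,
for strictly positive functions on a finite type. -/
lemma rev_holder {X : Type*} [Fintype X] [Nonempty X] {p q : ℝ} (hp0 : 0 < p) (hp1 : p < 1)
    (hq : q = p / (p - 1)) (f g : X → ℝ) (hf : ∀ x, 0 < f x) (hg : ∀ x, 0 < g x) :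
    (∑ x, f x ^ p) ^ (1 / p) * (∑ x, g x ^ q) ^ (1 / q) ≤ ∑ x, f x * g x := by
  have hp1' : (0:ℝ) < 1 - p := by linarith
  have hqneg : q < 0 := by
    rw [hq]; exact div_neg_of_pos_of_neg hp0 (by linarith)
  have hconj : Real.HolderConjugate (1/p) (1/(1-p)) :=
    Real.holderConjugate_one_div hp0 hp1' (by ring)
  have key := Real.inner_le_Lp_mul_Lq_of_nonneg Finset.univ hconj
    (f := fun x => (f x * g x) ^ p) (g := fun x => g x ^ (-p))
    (fun x _ => by have := hf x; have := hg x; positivity)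
    (fun x _ => by have := hg x; positivity)
  simp only [one_div_one_div] at key
  have e1 : ∀ x : X, (f x * g x) ^ p * g x ^ (-p) = f x ^ p := by
    intro x
    rw [Real.mul_rpow (hf x).le (hg x).le, mul_assoc,
      ← Real.rpow_add (hg x), add_neg_cancel, Real.rpow_zero, mul_one]
  have e2 : ∀ x : X, ((f x * g x) ^ p) ^ (1/p) = f x * g x := by
    intro x
    rw [← Real.rpow_mul (by have := hf x; have := hg x; positivity), mul_one_div,
      div_self hp0.ne', Real.rpow_one]
  have e3 : ∀ x : X, (g x ^ (-p)) ^ (1/(1-p)) = g x ^ q := by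
    intro x
    rw [← Real.rpow_mul (hg x).le, hq]
    congr 1
    rw [mul_one_div, div_eq_div_iff (by linarith) (by linarith)]
    ring
  simp only [e1, e2, e3] at key
  -- now key : ∑ f^p ≤ (∑ f*g)^p * (∑ g^q)^(1-p)
  set A := ∑ x, f x ^ p with hA
  set B := ∑ x, g x ^ q with hB
  set C := ∑ x, f x * g x with hC
  have hApos : 0 < A := Finset.sum_pos (fun x _ => by have := hf x; positivity) univ_nonempty
  have hBpos : 0 < B := Finset.sum_pos (fun x _ => by have := hg x; positivity) univ_nonempty
  have hCpos : 0 < C := Finset.sum_pos (fun x _ => by have := hf x; have := hg x; positivity) univ_nonempty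
  have key2 : A ^ (1/p) ≤ C * B ^ ((1-p)/p) := by
    calc A ^ (1/p) ≤ (C ^ p * B ^ (1-p)) ^ (1/p) :=
          Real.rpow_le_rpow hApos.le key (by positivity)
      _ = C * B ^ ((1-p)/p) := by
          rw [Real.mul_rpow (by positivity) (by positivity),
            ← Real.rpow_mul hCpos.le, mul_one_div, div_self hp0.ne', Real.rpow_one,
            ← Real.rpow_mul hBpos.le, mul_one_div]
  calc A ^ (1/p) * B ^ (1/q) ≤ (C * B ^ ((1-p)/p)) * B ^ (1/q) := by
        apply mul_le_mul_of_nonneg_right key2 (by positivity)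
    _ = C := by
        rw [mul_assoc, ← Real.rpow_add hBpos]
        have : (1-p)/p + 1/q = 0 := by
          rw [hq]; field_simp; ring
        rw [this, Real.rpow_zero, mul_one]

/-- Reverse Minkowski inequality for a negative exponent `α < 0`, with weights. -/
lemma rev_minkowski {X : Type*} [Fintype X] [Nonempty X] {α : ℝ} (hα : α < 0)
    (w a b : X → ℝ) (hw : ∀ x, 0 < w x) (ha : ∀ x, 0 < a x) (hb : ∀ x, 0 < b x) :
    (∑ x, a x ^ α * w x) ^ (1/α) + (∑ x, b x ^ α * w x) ^ (1/α)
      ≤ (∑ x, (a x + b x) ^ α * w x) ^ (1/α) := by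
  have hα1 : α - 1 < 0 := by linarith
  have hαne : α ≠ 0 := hα.ne
  have hα1ne : α - 1 ≠ 0 := hα1.ne
  set p := α / (α - 1) with hp
  have hp0 : 0 < p := div_pos_of_neg_of_neg hα hα1
  have hp1 : p < 1 := by
    rw [hp, div_lt_one_of_neg hα1]; linarith
  have hq : α = p / (p - 1) := by
    rw [hp]; rw [div_sub_one hα1ne]
    rw [div_div_div_cancel_right₀]
    · rw [eq_div_iff (by intro h; apply hαne; linarith)]; ring
    · exact hα1ne
  set S := ∑ x, (a x + b x) ^ α * w x with hS
  have hSpos : 0 < S := Finset.sum_pos (fun x _ => by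
    have := ha x; have := hb x; have := hw x; positivity) univ_nonempty
  have happ : ∀ c : X → ℝ, (∀ x, 0 < c x) →
      S ^ (1/p) * (∑ x, c x ^ α * w x) ^ (1/α)
        ≤ ∑ x, (a x + b x) ^ (α - 1) * c x * w x := by
    intro c hc
    have h := rev_holder hp0 hp1 hq
      (fun x => (a x + b x) ^ (α - 1) * w x ^ ((α-1)/α))
      (fun x => c x * w x ^ (1/α))
      (fun x => by have := ha x; have := hb x; have := hw x; positivity)
      (fun x => by have := hc x; have := hw x; positivity)
    have e1 : ∀ x : X, ((a x + b x) ^ (α - 1) * w x ^ ((α-1)/α)) ^ p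
        = (a x + b x) ^ α * w x := by
      intro x
      have hab : 0 < a x + b x := by have := ha x; have := hb x; linarith
      have hwx := hw x
      rw [Real.mul_rpow (by positivity) (by positivity),
        ← Real.rpow_mul hab.le, ← Real.rpow_mul hwx.le,
        show (α-1)*p = α from by rw [hp]; field_simp,
        show (α-1)/α*p = 1 from by rw [hp]; field_simp,
        Real.rpow_one]
    have e2 : ∀ x : X, (c x * w x ^ (1/α)) ^ α = c x ^ α * w x := by
      intro x
      have hwx := hw x
      rw [Real.mul_rpow (hc x).le (by positivity), ← Real.rpow_mul hwx.le,
        one_div_mul_cancel hαne, Real.rpow_one]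
    have e3 : ∀ x : X, ((a x + b x) ^ (α - 1) * w x ^ ((α-1)/α)) * (c x * w x ^ (1/α))
        = (a x + b x) ^ (α - 1) * c x * w x := by
      intro x
      have hwx := hw x
      rw [mul_assoc, mul_comm (w x ^ ((α-1)/α)), mul_assoc, ← Real.rpow_add hwx,
        show (1/α + (α-1)/α) = 1 from by field_simp; ring, Real.rpow_one]
      ring
    simp only [e1, e2, e3] at h
    exact h
  have hsum : ∑ x, (a x + b x) ^ (α - 1) * a x * w x
      + ∑ x, (a x + b x) ^ (α - 1) * b x * w x = S := by
    rw [hS, ← Finset.sum_add_distrib]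
    refine Finset.sum_congr rfl fun x _ => ?_
    have hab : 0 < a x + b x := by have := ha x; have := hb x; linarith
    have : (a x + b x) ^ α = (a x + b x) ^ (α - 1) * (a x + b x) := by
      rw [← Real.rpow_add_one hab.ne', sub_add_cancel]
    rw [this]; ring
  have key : S ^ (1/p) * ((∑ x, a x ^ α * w x) ^ (1/α) + (∑ x, b x ^ α * w x) ^ (1/α))
      ≤ S ^ (1/p) * S ^ (1/α) := by
    have h2 : S ^ (1/p) * S ^ (1/α) = S := by
      rw [← Real.rpow_add hSpos, show (1/p + 1/α) = 1 from by rw [hp]; field_simp; ring,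
        Real.rpow_one]
    have hab2 := add_le_add (happ a ha) (happ b hb)
    rw [hsum] at hab2
    rw [mul_add, h2]; exact hab2
  exact le_of_mul_le_mul_left key (by positivity)

/-- Positive homogeneity of the weighted `α`-power mean. -/
lemma homog_rpow_mean {X : Type*} [Fintype X] [Nonempty X] {α : ℝ} (hα : α < 0)
    (w a : X → ℝ) (hw : ∀ x, 0 < w x) (ha : ∀ x, 0 < a x) {c : ℝ} (hc : 0 < c) :
    (∑ x, (c * a x) ^ α * w x) ^ (1/α) = c * (∑ x, a x ^ α * w x) ^ (1/α) := by
  have hαne : α ≠ 0 := hα.ne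
  have e : ∀ x : X, (c * a x) ^ α * w x = c ^ α * (a x ^ α * w x) := by
    intro x; rw [Real.mul_rpow hc.le (ha x).le]; ring
  simp only [e, ← Finset.mul_sum]
  have h : 0 < ∑ x, a x ^ α * w x := Finset.sum_pos
    (fun x _ => by have := ha x; have := hw x; positivity) univ_nonempty
  rw [Real.mul_rpow (by positivity) h.le, ← Real.rpow_mul hc.le,
    mul_one_div, div_self hαne, Real.rpow_one]

/-- Concavity in the channel: for fixed marginal `p_X`, the map sending a channel
`K` to `Σ_y (Σ_x K(x,y)^α p_X(x))^{1/α}` is concave on channels from `X` to `Y`,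
for every `α < 0`. -/
theorem sibson_neg_order_concave_in_channel
    {X Y : Type*} [Fintype X] [Fintype Y]
    (pX : X → ℝ) (hpX : ∀ x, 0 < pX x) (hpX1 : ∑ x, pX x = 1)
    (α : ℝ) (hα : α < 0)
    (K₁ K₂ : X × Y → ℝ)
    (hK₁pos : ∀ x y, 0 < K₁ (x, y)) (hK₁sum : ∀ x, ∑ y, K₁ (x, y) = 1)
    (hK₂pos : ∀ x y, 0 < K₂ (x, y)) (hK₂sum : ∀ x, ∑ y, K₂ (x, y) = 1)
    (lam : ℝ) (hlam0 : 0 ≤ lam) (hlam1 : lam ≤ 1) :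
    lam * (∑ y, (∑ x, K₁ (x, y) ^ α * pX x) ^ (1 / α))
        + (1 - lam) * (∑ y, (∑ x, K₂ (x, y) ^ α * pX x) ^ (1 / α))
      ≤ ∑ y, (∑ x, (lam * K₁ (x, y) + (1 - lam) * K₂ (x, y)) ^ α * pX x) ^ (1 / α) := by
  rcases isEmpty_or_nonempty X with hX | hX
  · simp [Finset.univ_eq_empty, Real.zero_rpow (inv_ne_zero hα.ne),
      Real.zero_rpow (one_div_ne_zero hα.ne)]
  rcases eq_or_lt_of_le hlam0 with h0 | h0
  · simp [← h0]
  rcases eq_or_lt_of_le hlam1 with h1 | h1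
  · simp [h1]
  have h1' : 0 < 1 - lam := by linarith
  rw [Finset.mul_sum, Finset.mul_sum, ← Finset.sum_add_distrib]
  apply Finset.sum_le_sum
  intro y _
  calc lam * (∑ x, K₁ (x, y) ^ α * pX x) ^ (1/α)
        + (1 - lam) * (∑ x, K₂ (x, y) ^ α * pX x) ^ (1/α)
      = (∑ x, (lam * K₁ (x, y)) ^ α * pX x) ^ (1/α)
        + (∑ x, ((1 - lam) * K₂ (x, y)) ^ α * pX x) ^ (1/α) := by
        rw [homog_rpow_mean hα pX (fun x => K₁ (x, y)) hpX (fun x => hK₁pos x y) h0,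
          homog_rpow_mean hα pX (fun x => K₂ (x, y)) hpX (fun x => hK₂pos x y) h1']
    _ ≤ (∑ x, (lam * K₁ (x, y) + (1 - lam) * K₂ (x, y)) ^ α * pX x) ^ (1/α) :=
        rev_minkowski hα pX (fun x => lam * K₁ (x, y)) (fun x => (1 - lam) * K₂ (x, y))
          hpX (fun x => by have := hK₁pos x y; positivity)
          (fun x => by have := hK₂pos x y; positivity)
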